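/- Fix β real with 0 < |β| < 1, γ = (1−β²)^{−1/2}, x₁, x₂ ∈ ℝ. Let A, Aₜ be the kink-antikink profile with parameters (β, x₁, x₂), and let Q̃(x) = 4·arctan(e^{γ(x+x₁+x₂)}) with Q̃ₜ(x) = 2βγ·sech(γ(x+x₁+x₂)) (the real kink profile of speed −β and shift x₁+x₂). Set a = a(β) = √((1+β)/(1−β)). Then: (1) lim_{x→+∞} cos((A(x)+Q̃(x))/2) = −1, lim_{x→−∞} cos((A(x)+Q̃(x))/2) = 1, lim_{x→+∞} cos((A(x)−Q̃(x))/2) = −1, lim_{x→−∞} cos((A(x)−Q̃(x))/2) = 1; (2) for all x ∈ ℝ: A′(x) − Q̃ₜ(x) = (1/a)·sin((A(x)+Q̃(x))/2) + a·sin((A(x)−Q̃(x))/2) and Aₜ(x) − Q̃′(x) = (1/a)·sin((A(x)+Q̃(x))/2) − a·sin((A(x)−Q̃(x))/2); i.e. (A, Aₜ) is a Bäcklund transform of (Q̃, Q̃ₜ) with parameter a(β). -/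

import Mathlib

open Filter Topology

lemma sin_two_arctan (t : ℝ) : Real.sin (2 * Real.arctan t) = 2*t/(1+t^2) := by
  have h : (0:ℝ) < 1 + t^2 := by positivity
  have h2 : Real.sqrt (1+t^2) ^ 2 = 1+t^2 := Real.sq_sqrt h.le
  have h3 : Real.sqrt (1+t^2) ≠ 0 := by positivity
  rw [Real.sin_two_mul, Real.sin_arctan, Real.cos_arctan]
  field_simp
  rw [h2]
  

lemma cos_two_arctan (t : ℝ) : Real.cos (2 * Real.arctan t) = (1-t^2)/(1+t^2) := by
  have h : (0:ℝ) < 1 + t^2 := by positivity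
  have h2 : Real.sqrt (1+t^2) ^ 2 = 1+t^2 := Real.sq_sqrt h.le
  have h3 : Real.sqrt (1+t^2) ≠ 0 := by positivity
  rw [Real.cos_two_mul, Real.cos_arctan, div_pow, one_pow, h2]
  field_simp
  ring

lemma sin_half_sum (u r : ℝ) : Real.sin (2*Real.arctan u + 2*Real.arctan r)
    = (2*u*(1-r^2) + 2*r*(1-u^2))/((1+u^2)*(1+r^2)) := by
  have hu : (0:ℝ) < 1 + u^2 := by positivity
  have hr : (0:ℝ) < 1 + r^2 := by positivity
  rw [Real.sin_add, sin_two_arctan, cos_two_arctan, sin_two_arctan, cos_two_arctan]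
  field_simp

lemma sin_half_diff (u r : ℝ) : Real.sin (2*Real.arctan u - 2*Real.arctan r)
    = (2*u*(1-r^2) - 2*r*(1-u^2))/((1+u^2)*(1+r^2)) := by
  have hu : (0:ℝ) < 1 + u^2 := by positivity
  have hr : (0:ℝ) < 1 + r^2 := by positivity
  rw [Real.sin_sub, sin_two_arctan, cos_two_arctan, sin_two_arctan, cos_two_arctan]
  field_simp

lemma cosh_comp_atTop {f : ℝ → ℝ} {l : Filter ℝ} (h : Tendsto f l atTop) :
    Tendsto (fun x => Real.cosh (f x)) l atTop := by
  refine tendsto_atTop_mono (fun x => ?_) ((Real.tendsto_exp_atTop.comp h).atTop_div_const two_pos)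
  simp only [Function.comp]
  rw [Real.cosh_eq]
  have := Real.exp_pos (-(f x))
  linarith

lemma cosh_comp_atBot {f : ℝ → ℝ} {l : Filter ℝ} (h : Tendsto f l atBot) :
    Tendsto (fun x => Real.cosh (f x)) l atTop := by
  have h' : Tendsto (fun x => -(f x)) l atTop := tendsto_neg_atTop_iff.mpr h
  refine tendsto_atTop_mono (fun x => ?_) ((Real.tendsto_exp_atTop.comp h').atTop_div_const two_pos)
  simp only [Function.comp]
  rw [Real.cosh_eq]
  have := Real.exp_pos (f x)
  linarith

set_option maxHeartbeats 2000000 in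
/-- **The kink-antikink as a Bäcklund transform of a real kink (Proposition 4.6).**
For `0 < |β| < 1`, `γ = (1−β²)^{-1/2}`, the kink-antikink profile `(A, Aₜ)` and the real
kink profile `Q̃` of speed `−β` and shift `x₁+x₂` satisfy `cos((A±Q̃)/2) → −1` at `+∞`
and `→ 1` at `−∞`, and the Bäcklund equations with parameter `a(β) = √((1+β)/(1−β))`. -/
theorem kink_antikink_backlund_of_kink (β x₁ x₂ : ℝ) (hβ0 : 0 < |β|) (hβ1 : |β| < 1)
    (γ : ℝ) (hγ : γ = (1 - β ^ 2) ^ (-(1 / 2 : ℝ)))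
    (A At : ℝ → ℝ)
    (hA : ∀ x : ℝ, A x
      = 4 * Real.arctan (Real.sinh (γ * x₁) / (β * Real.cosh (γ * (x + x₂)))))
    (hAt : ∀ x : ℝ, At x
      = 4 * β ^ 2 * γ * Real.cosh (γ * (x + x₂)) * Real.cosh (γ * x₁)
          / (β ^ 2 * (Real.cosh (γ * (x + x₂))) ^ 2 + (Real.sinh (γ * x₁)) ^ 2))
    (Q Qt : ℝ → ℝ)
    (hQ : ∀ x : ℝ, Q x = 4 * Real.arctan (Real.exp (γ * (x + x₁ + x₂))))
    (hQt : ∀ x : ℝ, Qt x = 2 * β * γ * (Real.cosh (γ * (x + x₁ + x₂)))⁻¹)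
    (a : ℝ) (ha : a = Real.sqrt ((1 + β) / (1 - β))) :
    -- (1) limits at ±∞
    (Tendsto (fun x : ℝ => Real.cos ((A x + Q x) / 2)) atTop (nhds (-1))) ∧
    (Tendsto (fun x : ℝ => Real.cos ((A x + Q x) / 2)) atBot (nhds 1)) ∧
    (Tendsto (fun x : ℝ => Real.cos ((A x - Q x) / 2)) atTop (nhds (-1))) ∧
    (Tendsto (fun x : ℝ => Real.cos ((A x - Q x) / 2)) atBot (nhds 1)) ∧
    -- (2) Bäcklund equations with parameter a(β)
    (∀ x : ℝ, deriv A x - Qt x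
      = (1 / a) * Real.sin ((A x + Q x) / 2) + a * Real.sin ((A x - Q x) / 2)) ∧
    (∀ x : ℝ, At x - deriv Q x
      = (1 / a) * Real.sin ((A x + Q x) / 2) - a * Real.sin ((A x - Q x) / 2)) := by
  have hβlt := abs_lt.mp hβ1
  have h1p : (0:ℝ) < 1 + β := by linarith [hβlt.1]
  have h1m : (0:ℝ) < 1 - β := by linarith [hβlt.2]
  have hβne : β ≠ 0 := by
    intro h; rw [h, abs_zero] at hβ0; exact lt_irrefl 0 hβ0
  have hb2 : (0:ℝ) < 1 - β^2 := by nlinarith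
  have hγ' : γ = (Real.sqrt (1-β^2))⁻¹ := by
    rw [hγ, Real.rpow_neg hb2.le, Real.sqrt_eq_rpow]
  have hsq : (0:ℝ) < Real.sqrt (1-β^2) := Real.sqrt_pos.mpr hb2
  have hγpos : 0 < γ := by rw [hγ']; positivity
  have hγ2 : γ^2 * (1-β^2) = 1 := by
    rw [hγ', inv_pow, Real.sq_sqrt hb2.le, inv_mul_cancel₀ hb2.ne']
  have haval : a = γ * (1+β) := by
    rw [ha, show (1+β)/(1-β) = (γ*(1+β))^2 from by
      field_simp
      linear_combination (-(1:ℝ))*hγ2]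
    exact Real.sqrt_sq (by positivity)
  have hane : a ≠ 0 := by rw [haval]; positivity
  have hainv' : 1/a = γ*(1-β) := by
    rw [haval, eq_comm, eq_div_iff (by positivity)]
    linear_combination hγ2
  -- limits
  have hAtop : Tendsto A atTop (𝓝 0) := by
    have hlin : Tendsto (fun x:ℝ => γ*(x+x₂)) atTop atTop :=
      (tendsto_atTop_add_const_right atTop x₂ tendsto_id).const_mul_atTop hγpos
    have hinv : Tendsto (fun x => (Real.cosh (γ*(x+x₂)))⁻¹) atTop (𝓝 0) :=
      (cosh_comp_atTop hlin).inv_tendsto_atTop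
    have h3 := hinv.const_mul (Real.sinh (γ*x₁)/β)
    rw [mul_zero] at h3
    have h2 : Tendsto (fun x => Real.sinh (γ*x₁) / (β * Real.cosh (γ*(x+x₂)))) atTop (𝓝 0) :=
      h3.congr fun x => by rw [← div_eq_mul_inv, div_div]
    have h4 := ((Real.continuous_arctan.tendsto 0).comp h2).const_mul (4:ℝ)
    rw [Real.arctan_zero, mul_zero] at h4
    exact h4.congr fun x => (hA x).symm
  have hAbot : Tendsto A atBot (𝓝 0) := by
    have hlin : Tendsto (fun x:ℝ => γ*(x+x₂)) atBot atBot :=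
      (tendsto_atBot_add_const_right atBot x₂ tendsto_id).const_mul_atBot hγpos
    have hinv : Tendsto (fun x => (Real.cosh (γ*(x+x₂)))⁻¹) atBot (𝓝 0) :=
      (cosh_comp_atBot hlin).inv_tendsto_atTop
    have h3 := hinv.const_mul (Real.sinh (γ*x₁)/β)
    rw [mul_zero] at h3
    have h2 : Tendsto (fun x => Real.sinh (γ*x₁) / (β * Real.cosh (γ*(x+x₂)))) atBot (𝓝 0) :=
      h3.congr fun x => by rw [← div_eq_mul_inv, div_div]
    have h4 := ((Real.continuous_arctan.tendsto 0).comp h2).const_mul (4:ℝ)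
    rw [Real.arctan_zero, mul_zero] at h4
    exact h4.congr fun x => (hA x).symm
  have hQtop : Tendsto Q atTop (𝓝 (2*Real.pi)) := by
    have hlin2 : Tendsto (fun x:ℝ => γ*(x+x₁+x₂)) atTop atTop :=
      (tendsto_atTop_add_const_right atTop x₂
        (tendsto_atTop_add_const_right atTop x₁ tendsto_id)).const_mul_atTop hγpos
    have hexp := Real.tendsto_exp_atTop.comp hlin2
    have harc := (Real.tendsto_arctan_atTop.mono_right nhdsWithin_le_nhds).comp hexp
    have h4 := harc.const_mul (4:ℝ)
    rw [show (4:ℝ)*(Real.pi/2) = 2*Real.pi by ring] at h4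
    exact h4.congr fun x => (hQ x).symm
  have hQbot : Tendsto Q atBot (𝓝 0) := by
    have hlin2 : Tendsto (fun x:ℝ => γ*(x+x₁+x₂)) atBot atBot :=
      (tendsto_atBot_add_const_right atBot x₂
        (tendsto_atBot_add_const_right atBot x₁ tendsto_id)).const_mul_atBot hγpos
    have hexp := Real.tendsto_exp_atBot.comp hlin2
    have harc := (Real.continuous_arctan.tendsto 0).comp hexp
    have h4 := harc.const_mul (4:ℝ)
    rw [Real.arctan_zero, mul_zero] at h4
    exact h4.congr fun x => (hQ x).symm
  -- derivative facts
  have hAfun : A = fun y => 4 * Real.arctan (Real.sinh (γ*x₁) / (β * Real.cosh (γ*(y+x₂)))) :=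
    funext hA
  have hQfun : Q = fun y => 4 * Real.arctan (Real.exp (γ*(y+x₁+x₂))) := funext hQ
  have hdA : ∀ x : ℝ, deriv A x = (-4*γ*β*Real.sinh (γ*x₁)*Real.sinh (γ*(x+x₂)))
      / (β^2 * (Real.cosh (γ*(x+x₂)))^2 + (Real.sinh (γ*x₁))^2) := by
    intro x
    have hcpos : (0:ℝ) < Real.cosh (γ*(x+x₂)) := Real.cosh_pos _
    have hcne : β * Real.cosh (γ*(x+x₂)) ≠ 0 := mul_ne_zero hβne hcpos.ne'
    have hβ2 : (0:ℝ) < β^2 := lt_of_le_of_ne (sq_nonneg β) (Ne.symm (pow_ne_zero 2 hβne))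
    have hD : (0:ℝ) < β^2 * (Real.cosh (γ*(x+x₂)))^2 + (Real.sinh (γ*x₁))^2 := by
      nlinarith [sq_nonneg (Real.sinh (γ*x₁)), mul_pos hβ2 (mul_pos hcpos hcpos)]
    have hlin : HasDerivAt (fun y : ℝ => γ * (y + x₂)) γ x := by
      simpa using ((hasDerivAt_id x).add_const x₂).const_mul γ
    have hden : HasDerivAt (fun y => β * Real.cosh (γ*(y+x₂)))
        (β * (Real.sinh (γ*(x+x₂)) * γ)) x := hlin.cosh.const_mul β
    have hu : HasDerivAt (fun y => Real.sinh (γ*x₁) / (β * Real.cosh (γ*(y+x₂))))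
        ((0 * (β * Real.cosh (γ*(x+x₂)))
            - Real.sinh (γ*x₁) * (β * (Real.sinh (γ*(x+x₂)) * γ)))
          / (β * Real.cosh (γ*(x+x₂)))^2) x :=
      (hasDerivAt_const x _).div hden hcne
    rw [hAfun, (hu.arctan.const_mul (4:ℝ)).deriv]
    field_simp
    ring
  have hdQ : ∀ x : ℝ, deriv Q x = 4*γ*Real.exp (γ*(x+x₁+x₂))
      / (1 + (Real.exp (γ*(x+x₁+x₂)))^2) := by
    intro x
    have hlin2 : HasDerivAt (fun y:ℝ => γ*(y+x₁+x₂)) γ x := by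
      simpa using (((hasDerivAt_id x).add_const x₁).add_const x₂).const_mul γ
    rw [hQfun, ((hlin2.exp).arctan.const_mul (4:ℝ)).deriv]
    ring
  -- sin formulas
  have hsp : ∀ x : ℝ, Real.sin ((A x + Q x)/2) =
      (2*(Real.sinh (γ*x₁) / (β * Real.cosh (γ*(x+x₂))))*(1-(Real.exp (γ*(x+x₁+x₂)))^2)
        + 2*(Real.exp (γ*(x+x₁+x₂)))*(1-(Real.sinh (γ*x₁) / (β * Real.cosh (γ*(x+x₂))))^2))
      / ((1+(Real.sinh (γ*x₁) / (β * Real.cosh (γ*(x+x₂))))^2)*(1+(Real.exp (γ*(x+x₁+x₂)))^2)) := by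
    intro x
    rw [hA, hQ, show (4 * Real.arctan (Real.sinh (γ*x₁) / (β * Real.cosh (γ*(x+x₂))))
        + 4 * Real.arctan (Real.exp (γ*(x+x₁+x₂))))/2
      = 2*Real.arctan (Real.sinh (γ*x₁) / (β * Real.cosh (γ*(x+x₂))))
        + 2*Real.arctan (Real.exp (γ*(x+x₁+x₂))) by ring, sin_half_sum]
  have hsm : ∀ x : ℝ, Real.sin ((A x - Q x)/2) =
      (2*(Real.sinh (γ*x₁) / (β * Real.cosh (γ*(x+x₂))))*(1-(Real.exp (γ*(x+x₁+x₂)))^2)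
        - 2*(Real.exp (γ*(x+x₁+x₂)))*(1-(Real.sinh (γ*x₁) / (β * Real.cosh (γ*(x+x₂))))^2))
      / ((1+(Real.sinh (γ*x₁) / (β * Real.cosh (γ*(x+x₂))))^2)*(1+(Real.exp (γ*(x+x₁+x₂)))^2)) := by
    intro x
    rw [hA, hQ, show (4 * Real.arctan (Real.sinh (γ*x₁) / (β * Real.cosh (γ*(x+x₂))))
        - 4 * Real.arctan (Real.exp (γ*(x+x₁+x₂))))/2
      = 2*Real.arctan (Real.sinh (γ*x₁) / (β * Real.cosh (γ*(x+x₂))))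
        - 2*Real.arctan (Real.exp (γ*(x+x₁+x₂))) by ring, sin_half_diff]
  refine ⟨?_, ?_, ?_, ?_, ?_, ?_⟩
  · have h := (hAtop.add hQtop).div_const 2
    have hcos := (Real.continuous_cos.tendsto _).comp h
    rw [show ((0:ℝ)+2*Real.pi)/2 = Real.pi by ring, Real.cos_pi] at hcos
    exact hcos
  · have h := (hAbot.add hQbot).div_const 2
    have hcos := (Real.continuous_cos.tendsto _).comp h
    rw [show ((0:ℝ)+0)/2 = 0 by norm_num, Real.cos_zero] at hcos
    exact hcos
  · have h := (hAtop.sub hQtop).div_const 2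
    have hcos := (Real.continuous_cos.tendsto _).comp h
    rw [show ((0:ℝ)-2*Real.pi)/2 = -Real.pi by ring, Real.cos_neg, Real.cos_pi] at hcos
    exact hcos
  · have h := (hAbot.sub hQbot).div_const 2
    have hcos := (Real.continuous_cos.tendsto _).comp h
    rw [show ((0:ℝ)-0)/2 = 0 by norm_num, Real.cos_zero] at hcos
    exact hcos
  · intro x
    rw [hdA, hQt, hsp, hsm, hainv', haval,
      show γ*(x+x₁+x₂) = γ*x₁ + γ*(x+x₂) by ring]
    simp only [Real.cosh_eq, Real.sinh_eq, Real.exp_add, Real.exp_neg]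
    set p := Real.exp (γ*x₁) with hpdef
    set q := Real.exp (γ*(x+x₂)) with hqdef
    have hp : (0:ℝ) < p := hpdef ▸ Real.exp_pos _
    have hq : (0:ℝ) < q := hqdef ▸ Real.exp_pos _
    have hβ2 : (0:ℝ) < β^2 := lt_of_le_of_ne (sq_nonneg β) (Ne.symm (pow_ne_zero 2 hβne))
    have hc : (0:ℝ) < (q+q⁻¹)/2 := by positivity
    have hcc : (0:ℝ) < (p*q+(p*q)⁻¹)/2 := by positivity
    have hD : (0:ℝ) < β^2*((q+q⁻¹)/2)^2 + ((p-p⁻¹)/2)^2 := by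
      nlinarith [sq_nonneg ((p-p⁻¹)/2), mul_pos hβ2 (mul_pos hc hc)]
    have hu2 : (0:ℝ) < 1 + (((p-p⁻¹)/2)/(β*((q+q⁻¹)/2)))^2 := by positivity
    have hr2 : (0:ℝ) < 1 + (p*q)^2 := by positivity
    field_simp
    ring
  · intro x
    rw [hAt, hdQ, hsp, hsm, hainv', haval,
      show γ*(x+x₁+x₂) = γ*x₁ + γ*(x+x₂) by ring]
    simp only [Real.cosh_eq, Real.sinh_eq, Real.exp_add, Real.exp_neg]
    set p := Real.exp (γ*x₁) with hpdef
    set q := Real.exp (γ*(x+x₂)) with hqdef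
    have hp : (0:ℝ) < p := hpdef ▸ Real.exp_pos _
    have hq : (0:ℝ) < q := hqdef ▸ Real.exp_pos _
    have hβ2 : (0:ℝ) < β^2 := lt_of_le_of_ne (sq_nonneg β) (Ne.symm (pow_ne_zero 2 hβne))
    have hc : (0:ℝ) < (q+q⁻¹)/2 := by positivity
    have hD : (0:ℝ) < β^2*((q+q⁻¹)/2)^2 + ((p-p⁻¹)/2)^2 := by
      nlinarith [sq_nonneg ((p-p⁻¹)/2), mul_pos hβ2 (mul_pos hc hc)]
    have hu2 : (0:ℝ) < 1 + (((p-p⁻¹)/2)/(β*((q+q⁻¹)/2)))^2 := by positivity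
    have hr2 : (0:ℝ) < 1 + (p*q)^2 := by positivity
    field_simp
    ring
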